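/- Let Γ be a C³ hypersurface with unit normal n and mean curvature κ = Div_Γ n. Then the tangential gradient of the mean curvature satisfies ∇_Γκ = P Δ_Γ n, where P = I − n⊗n and Δ_Γ n is the componentwise Laplace–Beltrami operator applied to n. -/

import Mathlib

open scoped RealInnerProductSpace

noncomputable def rankOne {V : Type*} [NormedAddCommGroup V] [InnerProductSpace ℝ V]
    (u v : V) : V →ₗ[ℝ] V where
  toFun w := ⟪v, w⟫ • u
  map_add' x y := by simp [inner_add_right, add_smul]
  map_smul' c x := by simp [inner_smul_right, mul_smul]

noncomputable def proj {V : Type*} [NormedAddCommGroup V] [InnerProductSpace ℝ V]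
    (n : V) : V →ₗ[ℝ] V :=
  LinearMap.id - rankOne n n

lemma trace_eq_sum_inner' {ι V : Type*} [Fintype ι] [DecidableEq ι] [NormedAddCommGroup V]
    [InnerProductSpace ℝ V] (bV : OrthonormalBasis ι ℝ V) (A : V →ₗ[ℝ] V) :
    LinearMap.trace ℝ V A = ∑ i, ⟪bV i, A (bV i)⟫ := by
  rw [LinearMap.trace_eq_matrix_trace ℝ bV.toBasis]
  simp [Matrix.trace, Matrix.diag, LinearMap.toMatrix_apply,
    OrthonormalBasis.coe_toBasis_repr_apply, OrthonormalBasis.repr_apply_apply,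
    OrthonormalBasis.coe_toBasis]

lemma trace_rankOne {V : Type*} [NormedAddCommGroup V] [InnerProductSpace ℝ V]
    [FiniteDimensional ℝ V] (u v : V) :
    LinearMap.trace ℝ V (rankOne u v) = ⟪v, u⟫ := by
  classical
  rw [trace_eq_sum_inner' (stdOrthonormalBasis ℝ V)]
  simp only [rankOne, LinearMap.coe_mk, AddHom.coe_mk, inner_smul_right]
  simpa using (stdOrthonormalBasis ℝ V).sum_inner_mul_inner v u

lemma proj_inner {V : Type*} [NormedAddCommGroup V] [InnerProductSpace ℝ V]
    (n a c : V) : ⟪proj n a, c⟫ = ⟪a, proj n c⟫ := by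
  simp only [proj, rankOne, LinearMap.sub_apply, LinearMap.id_apply, LinearMap.coe_mk,
    AddHom.coe_mk, inner_sub_left, inner_sub_right, real_inner_smul_left, real_inner_smul_right]
  rw [real_inner_comm n a]
  ring

lemma comp_proj {V : Type*} [NormedAddCommGroup V] [InnerProductSpace ℝ V]
    (A : V →ₗ[ℝ] V) (n : V) : A ∘ₗ proj n = A - rankOne (A n) n := by
  ext w
  simp [proj, rankOne, map_smul, map_sub]

lemma trace_comp_proj {V : Type*} [NormedAddCommGroup V] [InnerProductSpace ℝ V]
    [FiniteDimensional ℝ V] (A : V →ₗ[ℝ] V) (n : V) :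
    LinearMap.trace ℝ V (A ∘ₗ proj n) = LinearMap.trace ℝ V A - ⟪n, A n⟫ := by
  rw [comp_proj, map_sub, trace_rankOne]

lemma tangential_grad_mean_curvature_aux {E : Type*} [NormedAddCommGroup E]
    [InnerProductSpace ℝ E] [FiniteDimensional ℝ E]
    (b : E → ℝ) (hb : ContDiff ℝ 3 b)
    (U : Set E) (hU : IsOpen U)
    (heik : ∀ y ∈ U, ‖gradient b y‖ = 1)
    (x : E) (hx : x ∈ U)
    (K : E → ℝ)
    (hK : ∀ y, K y = LinearMap.trace ℝ E
      ((fderiv ℝ (gradient b) y).toLinearMap ∘ₗ proj (gradient b y))) :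
    ∀ e, ⟪proj (gradient b x) (gradient K x), e⟫ =
      LinearMap.trace ℝ E
        ((fderiv ℝ (fun y => proj (gradient b y)
            (gradient (fun z => ⟪gradient b z, proj (gradient b x) e⟫) y)) x).toLinearMap ∘ₗ
          proj (gradient b x)) := by
  intro e
  have hb2 : ContDiff ℝ 2 (fderiv ℝ b) := hb.fderiv_right (by norm_num)
  have hgradb : gradient b =
      (InnerProductSpace.toDual ℝ E).symm ∘ fun y => fderiv ℝ b y := rfl
  have hb' : ContDiff ℝ 2 (gradient b) := by
    rw [hgradb]
    exact (InnerProductSpace.toDual ℝ E).symm.contDiff.comp hb2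
  set H : E → (E →L[ℝ] E) := fun y => fderiv ℝ (gradient b) y with hH
  have hHc : ContDiff ℝ 1 H := hb'.fderiv_right (by norm_num)
  have hHd : Differentiable ℝ H := hHc.differentiable (by norm_num)
  have hgd : Differentiable ℝ (gradient b) := hb'.differentiable (by norm_num)
  have hbd2 : Differentiable ℝ (fderiv ℝ b) := hb2.differentiable (by norm_num)
  -- the inner product against the Hessian is the second derivative of b
  have hinnerH : ∀ y u w, ⟪H y u, w⟫ = fderiv ℝ (fderiv ℝ b) y u w := by
    intro y u w
    have d2 : (fun z => ⟪gradient b z, w⟫) = fun z => fderiv ℝ b z w := by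
      funext z; exact InnerProductSpace.toDual_symm_apply
    have d1 : fderiv ℝ (fun z => ⟪gradient b z, w⟫) y u = ⟪H y u, w⟫ := by
      rw [fderiv_inner_apply (𝕜 := ℝ) (hgd y) (differentiableAt_const w) u, fderiv_const_apply]
      simp [hH, real_inner_comm]
    have d3 : fderiv ℝ (fun z => fderiv ℝ b z w) y u = fderiv ℝ (fderiv ℝ b) y u w := by
      rw [((hbd2 y).hasFDerivAt.clm_apply (hasFDerivAt_const w y)).fderiv]
      simp
    rw [← d1, d2, d3]
  -- symmetry of the Hessian
  have hsymH : ∀ y u w, ⟪H y u, w⟫ = ⟪H y w, u⟫ := by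
    intro y u w
    rw [hinnerH, hinnerH]
    exact second_derivative_symmetric (fun z => (hb.differentiable (by norm_num) z).hasFDerivAt)
      ((hbd2 y).hasFDerivAt) u w
  -- eikonal consequence : H y (∇b y) = 0 on U
  have hHn : ∀ y ∈ U, H y (gradient b y) = 0 := by
    intro y hy
    have hq : (fun z => ⟪gradient b z, gradient b z⟫) =ᶠ[nhds y] fun _ => (1 : ℝ) := by
      filter_upwards [hU.mem_nhds hy] with z hz
      rw [real_inner_self_eq_norm_mul_norm, heik z hz]; norm_num
    have hfq : fderiv ℝ (fun z => ⟪gradient b z, gradient b z⟫) y = 0 := by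
      rw [hq.fderiv_eq]; exact fderiv_const_apply 1
    have h1 : ∀ u, ⟪H y u, gradient b y⟫ = 0 := by
      intro u
      have h2 := fderiv_inner_apply (𝕜 := ℝ) (hgd y) (hgd y) u
      rw [hfq] at h2
      simp only [ContinuousLinearMap.zero_apply] at h2
      have h3 : ⟪gradient b y, (fderiv ℝ (gradient b) y) u⟫
          = ⟪(fderiv ℝ (gradient b) y) u, gradient b y⟫ := real_inner_comm _ _
      rw [hH]
      linarith
    refine ext_inner_right ℝ fun w => ?_
    rw [hsymH y _ w, inner_zero_left]
    exact h1 w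
  -- the fixed tangent vector
  set v : E := proj (gradient b x) e with hv
  -- gradient of z ↦ ⟪∇b z, v⟫ is H · v
  have hgradf : ∀ y, gradient (fun z => ⟪gradient b z, v⟫) y = H y v := by
    intro y
    refine ext_inner_right ℝ fun w => ?_
    have h1 : ⟪gradient (fun z => ⟪gradient b z, v⟫) y, w⟫ =
        fderiv ℝ (fun z => ⟪gradient b z, v⟫) y w := InnerProductSpace.toDual_symm_apply
    rw [h1, fderiv_inner_apply (𝕜 := ℝ) (hgd y) (differentiableAt_const v) w,
      fderiv_const_apply]
    simp only [ContinuousLinearMap.zero_apply, inner_zero_right, zero_add]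
    exact hsymH y w v
  -- the trace as a continuous linear map
  set trCLM : (E →L[ℝ] E) →L[ℝ] ℝ :=
    LinearMap.toContinuousLinearMap ((LinearMap.trace ℝ E) ∘ₗ (ContinuousLinearMap.coeLM ℝ))
    with htr
  have htrapp : ∀ A : E →L[ℝ] E, trCLM A = LinearMap.trace ℝ E A.toLinearMap := by
    intro A
    simp [htr]
  -- K coincides with the full trace of H near x
  have hKev : K =ᶠ[nhds x] fun y => trCLM (H y) := by
    filter_upwards [hU.mem_nhds hx] with y hy
    have h0 : ((fderiv ℝ (gradient b) y).toLinearMap) (gradient b y) = 0 := hHn y hy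
    rw [hK y, trace_comp_proj, h0, inner_zero_right, sub_zero, htrapp]
  set DH := fderiv ℝ H x with hDH
  have hfK : fderiv ℝ K x = trCLM.comp DH := by
    rw [hKev.fderiv_eq]
    exact (trCLM.hasFDerivAt.comp x (hHd x).hasFDerivAt).fderiv
  -- LHS value
  have hLHS : ⟪proj (gradient b x) (gradient K x), e⟫ =
      LinearMap.trace ℝ E (DH v).toLinearMap := by
    rw [proj_inner, ← hv]
    have h1 : ⟪gradient K x, v⟫ = fderiv ℝ K x v := InnerProductSpace.toDual_symm_apply
    rw [h1, hfK]
    exact htrapp (DH v)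
  -- symmetry of the third derivative in the first two slots
  have hS12 : ∀ u w, DH u w = DH w u :=
    second_derivative_symmetric (fun y => (hgd y).hasFDerivAt) (hHd x).hasFDerivAt
  -- derivative of y ↦ H y c
  have hfHv : ∀ c : E, fderiv ℝ (fun y => H y c) x = DH.flip c := by
    intro c
    rw [((hHd x).hasFDerivAt.clm_apply (hasFDerivAt_const c x)).fderiv]
    ext w
    simp
    rfl
  -- symmetry in the last two slots
  have hS23 : ∀ u w z, ⟪DH u w, z⟫ = ⟪DH u z, w⟫ := by
    intro u w z
    have d : ∀ c d : E, fderiv ℝ (fun y => ⟪H y c, d⟫) x u = ⟪DH u c, d⟫ := by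
      intro c d
      rw [fderiv_inner_apply (𝕜 := ℝ) ((hHd.clm_apply (differentiable_const c)) x)
        (differentiableAt_const d) u, fderiv_const_apply]
      simp only [ContinuousLinearMap.zero_apply, inner_zero_right, zero_add]
      rw [hfHv c]
      simp
    have heq : (fun y => ⟪H y w, z⟫) = fun y => ⟪H y z, w⟫ := funext fun y => hsymH y w z
    rw [← d w z, ← d z w, heq]
  -- third-derivative eikonal consequence: DH n n = 0
  have hDHnn : DH (gradient b x) (gradient b x) = 0 := by
    have hg0 : (fun y => H y (gradient b y)) =ᶠ[nhds x] fun _ => (0 : E) := by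
      filter_upwards [hU.mem_nhds hx] with y hy; exact hHn y hy
    have h1 : fderiv ℝ (fun y => H y (gradient b y)) x = 0 := by
      rw [hg0.fderiv_eq]; exact fderiv_const_apply 0
    have h2 := ((hHd x).hasFDerivAt.clm_apply (hgd x).hasFDerivAt).fderiv
    rw [h1] at h2
    have h3 := congrArg (fun T : E →L[ℝ] E => T (gradient b x)) h2.symm
    simp only [ContinuousLinearMap.zero_apply, ContinuousLinearMap.add_apply,
      ContinuousLinearMap.coe_comp', Function.comp_apply, ContinuousLinearMap.flip_apply] at h3
    have h4 : (fderiv ℝ (gradient b) x) (gradient b x) = 0 := hHn x hx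
    rw [h4, map_zero, zero_add] at h3
    rw [hDH]
    exact h3
  have hzero : ⟪gradient b x, DH v (gradient b x)⟫ = 0 := by
    rw [hS12 v _, real_inner_comm, hS23, hDHnn, inner_zero_left]
  -- the RHS field agrees with y ↦ H y v near x
  have hGev : (fun y => proj (gradient b y) (gradient (fun z => ⟪gradient b z, v⟫) y))
      =ᶠ[nhds x] fun y => H y v := by
    filter_upwards [hU.mem_nhds hx] with y hy
    rw [hgradf y]
    have h0 : ⟪gradient b y, H y v⟫ = 0 := by
      rw [real_inner_comm, hsymH y v _, hHn y hy, inner_zero_left]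
    simp only [proj, rankOne, LinearMap.sub_apply, LinearMap.id_apply, LinearMap.coe_mk,
      AddHom.coe_mk, h0, zero_smul, sub_zero]
  have hfG : fderiv ℝ (fun y => proj (gradient b y)
      (gradient (fun z => ⟪gradient b z, v⟫) y)) x = DH.flip v := by
    rw [hGev.fderiv_eq]; exact hfHv v
  have hflip : DH.flip v = DH v := ContinuousLinearMap.ext fun w => hS12 w v
  rw [hLHS, hfG, hflip, trace_comp_proj]
  rw [ContinuousLinearMap.coe_coe]
  rw [hzero, sub_zero]

/-- `∇_Γ κ = P Δ_Γ n`: for a C³ hypersurface, realized as a level set of a C³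
function `b` with `|∇b| = 1` near the surface (so `n = ∇b`), the tangential
gradient of the mean curvature `κ = Div_Γ n = tr(Dn ∘ P)` satisfies, for every
vector `e`, `(P ∇_Γκ)·e = Δ_Γ(n · (P e))`, i.e. `∇_Γκ = P Δ_Γ n` with `Δ_Γ`
applied componentwise to `n`. -/
theorem tangential_grad_mean_curvature {N : ℕ}
    (b : EuclideanSpace ℝ (Fin N) → ℝ) (hb : ContDiff ℝ 3 b)
    (U : Set (EuclideanSpace ℝ (Fin N))) (hU : IsOpen U)
    (heik : ∀ y ∈ U, ‖gradient b y‖ = 1)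
    (x : EuclideanSpace ℝ (Fin N)) (hx : x ∈ U)
    -- the mean curvature field `κ = Div_Γ n = tr(Dn ∘ P)` with `n = ∇b`
    (K : EuclideanSpace ℝ (Fin N) → ℝ)
    (hK : ∀ y, K y = LinearMap.trace ℝ (EuclideanSpace ℝ (Fin N))
      ((fderiv ℝ (gradient b) y).toLinearMap ∘ₗ proj (gradient b y))) :
    ∀ e, ⟪proj (gradient b x) (gradient K x), e⟫ =
      LinearMap.trace ℝ (EuclideanSpace ℝ (Fin N))
        ((fderiv ℝ (fun y => proj (gradient b y)
            (gradient (fun z => ⟪gradient b z, proj (gradient b x) e⟫) y)) x).toLinearMap ∘ₗ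
          proj (gradient b x)) := by
  exact tangential_grad_mean_curvature_aux b hb U hU heik x hx K hK
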